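/- arXiv:1803.05191 — 5 statements merged into one kernel-verified Lean document; each statement's English description precedes it below -/
import Mathlib

section
/- If a crossing c of an oriented virtual knot diagram D has sign sgn(c) and index Ind(c), then the crossing c' obtained by the crossing change operation satisfies sgn(c') = -sgn(c) and Ind(c') = -Ind(c); consequently, for every nonzero integer n the n-th dwrithe ∇J_n(D) = J_n(D) - J_{-n}(D) is unchanged under a crossing change. -/
/-- The `n`-th writhe: sum of signs of crossings with index `n`. -/
def Jw (M : Multiset (ℤ × ℤ)) (n : ℤ) : ℤ :=
  ((M.filter (fun p => p.2 = n)).map Prod.fst).sum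

/-- The `n`-th dwrithe `∇J_n = J_n - J_{-n}`. -/
def dw (M : Multiset (ℤ × ℤ)) (n : ℤ) : ℤ := Jw M n - Jw M (-n)

lemma Jw_cons (a : ℤ × ℤ) (T : Multiset (ℤ × ℤ)) (n : ℤ) :
    Jw (a ::ₘ T) n = (if a.2 = n then a.1 else 0) + Jw T n := by
  unfold Jw
  rw [Multiset.filter_cons]
  split <;> simp [*]

/-- A crossing change replaces a crossing `(s, i)` by `(-s, -i)`: the new crossing
has sign `-s` and index `-i`, and for every nonzero `n` the `n`-th dwrithe is unchanged. -/
theorem stmt0 (M : Multiset (ℤ × ℤ)) (s i : ℤ) (hs : s = 1 ∨ s = -1)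
    (hmem : (s, i) ∈ M)
    (M' : Multiset (ℤ × ℤ)) (hM' : M' = (-s, -i) ::ₘ M.erase (s, i)) :
    ∀ n : ℤ, n ≠ 0 → dw M' n = dw M n := by
  intro n hn
  have hM : M = (s, i) ::ₘ M.erase (s, i) := (Multiset.cons_erase hmem).symm
  rw [hM', dw, dw, hM, Jw_cons, Jw_cons, Jw_cons, Jw_cons]
  have h1 : (-i = n) ↔ (i = -n) := by omega
  have h2 : (-i = -n) ↔ (i = n) := by omega
  simp only [h1, h2, Multiset.erase_cons_head]
  split <;> split <;> ring
end

section
/- Let D have crossing data {(sgn(c), Ind(c), ∇J_n(D_c))}_c and global dwrithe ∇J_n(D). Suppose the mirror image D* has corresponding data sgn(c*) = −sgn(c), Ind(c*) = −Ind(c), ∇J_n(D*_{c*}) = −∇J_n(D_c) and ∇J_n(D*) = ∇J_n(D). Then L^n_{D*}(t, ℓ) = −L^n_D(t^{−1}, ℓ). -/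
noncomputable section

/-- The Laurent polynomial ring ℤ[t^{±1}, ℓ^{±1}], as the group algebra ℤ[ℤ²]. -/
abbrev LP := AddMonoidAlgebra ℤ (ℤ × ℤ)

/-- The monomial `t^p ℓ^q`. -/
def mono (p q : ℤ) : LP := AddMonoidAlgebra.single (p, q) 1

/-- The additive monoid hom `(p, q) ↦ (-p, q)` on exponents. -/
def negT : (ℤ × ℤ) →+ (ℤ × ℤ) where
  toFun p := (-p.1, p.2)
  map_zero' := by simp
  map_add' := by intro a b; ext <;> simp <;> ring

/-- The ℤ[ℓ^{±1}]-algebra automorphism `t ↦ t⁻¹` of ℤ[t^{±1}, ℓ^{±1}] (as a ring hom). -/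
def invT : LP →+* LP := AddMonoidAlgebra.mapDomainRingHom ℤ negT

lemma invT_mono (p q : ℤ) : invT (mono p q) = mono (-p) q := by
  simp [invT, mono, AddMonoidAlgebra.mapDomainRingHom, Finsupp.mapDomain_single, negT]

/-- Under mirror image (sgn ↦ -sgn, Ind ↦ -Ind, ∇J_n(D_c) ↦ -∇J_n(D_c),
∇J_n(D) unchanged), the L-polynomial satisfies L^n_{D*}(t, ℓ) = -L^n_D(t⁻¹, ℓ). -/
theorem stmt7 {α : Type} (C : Finset α) (sgn ind dJc : α → ℤ) (dJ : ℤ)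
    (sgns inds dJcs : α → ℤ) (dJs : ℤ)
    (hsgn : ∀ c ∈ C, sgn c = 1 ∨ sgn c = -1)
    (h1 : ∀ c ∈ C, sgns c = -sgn c) (h2 : ∀ c ∈ C, inds c = -ind c)
    (h3 : ∀ c ∈ C, dJcs c = -dJc c) (h4 : dJs = dJ) :
    ∑ c ∈ C, sgns c • (mono (inds c) |dJcs c| - mono 0 |dJs|)
      = - invT (∑ c ∈ C, sgn c • (mono (ind c) |dJc c| - mono 0 |dJ|)) := by
  rw [map_sum, ← Finset.sum_neg_distrib]
  refine Finset.sum_congr rfl fun c hc => ?_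
  rw [h1 c hc, h2 c hc, h3 c hc, h4, map_zsmul, map_sub, invT_mono, invT_mono,
    abs_neg, neg_zero, neg_smul]
end
end

section
/- Let D have crossing data {(sgn(c), Ind(c), ∇J_n(D_c))}_c and global dwrithe ∇J_n(D). Suppose the reversed diagram D⁻ has data sgn(c⁻) = sgn(c), Ind(c⁻) = −Ind(c), ∇J_n(D⁻_{c⁻}) = ∇J_n(D_c) and ∇J_n(D⁻) = −∇J_n(D). Then L^n_{D⁻}(t, ℓ) = L^n_D(t^{−1}, ℓ). -/
noncomputable section

/-- Under orientation reversal (sgn unchanged, Ind ↦ -Ind, ∇J_n(D_c) unchanged,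
∇J_n(D) ↦ -∇J_n(D)), the L-polynomial satisfies L^n_{D⁻}(t, ℓ) = L^n_D(t⁻¹, ℓ). -/
theorem stmt8 {α : Type} (C : Finset α) (sgn ind dJc : α → ℤ) (dJ : ℤ)
    (sgnr indr dJcr : α → ℤ) (dJr : ℤ)
    (hsgn : ∀ c ∈ C, sgn c = 1 ∨ sgn c = -1)
    (h1 : ∀ c ∈ C, sgnr c = sgn c) (h2 : ∀ c ∈ C, indr c = -ind c)
    (h3 : ∀ c ∈ C, dJcr c = dJc c) (h4 : dJr = -dJ) :
    ∑ c ∈ C, sgnr c • (mono (indr c) |dJcr c| - mono 0 |dJr|)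
      = invT (∑ c ∈ C, sgn c • (mono (ind c) |dJc c| - mono 0 |dJ|)) := by
  rw [map_sum]
  refine Finset.sum_congr rfl fun c hc => ?_
  rw [h1 c hc, h2 c hc, h3 c hc, h4]
  rw [zsmul_eq_mul, zsmul_eq_mul, map_mul, map_intCast, map_sub, invT_mono, invT_mono]
  simp [abs_neg]
end
end

section
/- Let D be a diagram, c a crossing of D, and D' the diagram obtained by a crossing change at c with corresponding crossing c'. Assume sgn(c') = −sgn(c), Ind(c') = −Ind(c), ∇J_n(D'_{c'}) = −∇J_n(D_c), ∇J_n(D') = ∇J_n(D), and the data at all other crossings is unchanged. Then L^n_{D'}(t, ℓ) − L^n_D(t, ℓ) = sgn(c)·(2ℓ^{|∇J_n(D)|} − (t^{Ind(c)} + t^{−Ind(c)}) ℓ^{|∇J_n(D_c)|}). -/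
noncomputable section

/-- The crossing change formula: if D' is obtained from D by a crossing change at
c₀ (sgn, Ind, ∇J_n(D_c) negated at c₀, all other data and ∇J_n(D) unchanged), then
L^n_{D'} - L^n_D = sgn(c₀)(2ℓ^{|∇J_n(D)|} - (t^{Ind(c₀)} + t^{-Ind(c₀)})ℓ^{|∇J_n(D_{c₀})|}). -/
theorem stmt9 {α : Type} [DecidableEq α] (C : Finset α)
    (sgn ind dJc : α → ℤ) (dJ : ℤ) (c₀ : α) (hc₀ : c₀ ∈ C)
    (hsgn : ∀ c ∈ C, sgn c = 1 ∨ sgn c = -1)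
    (sgn' ind' dJc' : α → ℤ) (dJ' : ℤ)
    (h1 : sgn' = Function.update sgn c₀ (-sgn c₀))
    (h2 : ind' = Function.update ind c₀ (-ind c₀))
    (h3 : dJc' = Function.update dJc c₀ (-dJc c₀))
    (h4 : dJ' = dJ) :
    (∑ c ∈ C, sgn' c • (mono (ind' c) |dJc' c| - mono 0 |dJ'|))
      - (∑ c ∈ C, sgn c • (mono (ind c) |dJc c| - mono 0 |dJ|))
      = sgn c₀ • ((2 : LP) * mono 0 |dJ|
          - (mono (ind c₀) |dJc c₀| + mono (-ind c₀) |dJc c₀|)) := by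
  subst h1 h2 h3
  rw [h4]
  rw [← Finset.add_sum_erase C _ hc₀, ← Finset.add_sum_erase C
    (fun c => sgn c • (mono (ind c) |dJc c| - mono 0 |dJ|)) hc₀]
  have hrest : ∀ c ∈ C.erase c₀,
      (Function.update sgn c₀ (-sgn c₀) c) •
        (mono (Function.update ind c₀ (-ind c₀) c)
          |Function.update dJc c₀ (-dJc c₀) c| - mono 0 |dJ|)
      = sgn c • (mono (ind c) |dJc c| - mono 0 |dJ|) := by
    intro c hc
    have hne : c ≠ c₀ := Finset.ne_of_mem_erase hc
    rw [Function.update_of_ne hne, Function.update_of_ne hne, Function.update_of_ne hne]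
  rw [Finset.sum_congr rfl hrest]
  simp only [Function.update_self, abs_neg]
  have h2m : (2 : LP) * mono 0 |dJ| = mono 0 |dJ| + mono 0 |dJ| := by ring
  rw [h2m]
  module
end
end

section
/- With notation as in the crossing-change formula, if Ind(c) ≠ 0, then L^n_{D'}(t, ℓ) ≠ L^n_D(t, ℓ); hence the crossing c is not cosmetic. -/
noncomputable section

/-- If L^n_{D'} - L^n_D = sgn(c)(2ℓ^{|∇J_n(D)|} - (t^{Ind(c)} + t^{-Ind(c)})ℓ^{|∇J_n(D_c)|})
and Ind(c) ≠ 0, then L^n_{D'} ≠ L^n_D; hence c is not a cosmetic crossing. -/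
theorem stmt10 (L L' : LP) (s i p q : ℤ) (hs : s = 1 ∨ s = -1)
    (hdiff : L' - L = s • ((2 : LP) * mono 0 |p| - (mono i |q| + mono (-i) |q|)))
    (hi : i ≠ 0) :
    L' ≠ L := by
  intro h
  rw [h, sub_self] at hdiff
  have hE : (2 : LP) * mono 0 |p| - (mono i |q| + mono (-i) |q|) = 0 := by
    rcases hs with rfl | rfl
    · simpa using hdiff.symm
    · have := hdiff.symm
      rw [neg_smul, one_smul, neg_eq_zero] at this
      exact this
  rw [two_mul] at hE
  have hE' : (Finsupp.single ((0:ℤ),|p|) (1:ℤ) + Finsupp.single (0,|p|) 1) -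
      (Finsupp.single (i,|q|) 1 + Finsupp.single (-i,|q|) 1) = (0 : (ℤ×ℤ) →₀ ℤ) := congrArg AddMonoidAlgebra.coeff hE
  have hc := congrArg (fun f : (ℤ×ℤ) →₀ ℤ => f (i, |q|)) hE'
  simp [Finsupp.single_apply, Prod.ext_iff, hi] at hc
  omega
end
end
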